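/- For every natural number n ≥ 1 and every x ∈ ℝ^n, the function f(x) = max(0, x_1, …, x_n) fails to be locally affine at x (that is, there is no open neighborhood U of x and no affine map g : ℝ^n → ℝ with f = g on U) if and only if at least two indices j ∈ {0,1,…,n} satisfy x_j = f(x) (where x_0 := 0). Equivalently, the set of points at which f is not locally affine is exactly the support |L^n_{n−1}|. -/

import Mathlib

open Finset

/-- The generator `-e_i` of the fan, for `i ∈ {0,1,…,n}`:
for `i = 0` it is `-e_0 = e_1 + ⋯ + e_n`, and for `i ≥ 1` it is `-e_i`. -/
def negE (n : ℕ) (i : Fin (n + 1)) : Fin n → ℝ :=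
  fun j => if (i : ℕ) = 0 then 1 else if (j : ℕ) + 1 = (i : ℕ) then -1 else 0

/-- The cone `σ_I`: all nonnegative combinations of the vectors `-e_i`, `i ∈ I`. -/
def sigmaCone (n : ℕ) (I : Finset (Fin (n + 1))) : Set (Fin n → ℝ) :=
  { x | ∃ lam : Fin (n + 1) → ℝ, (∀ i, 0 ≤ lam i) ∧ x = ∑ i ∈ I, lam i • negE n i }

/-- The relative interior of `σ_I`: combinations with strictly positive coefficients. -/
def relintCone (n : ℕ) (I : Finset (Fin (n + 1))) : Set (Fin n → ℝ) :=
  { x | ∃ lam : Fin (n + 1) → ℝ, (∀ i ∈ I, 0 < lam i) ∧ x = ∑ i ∈ I, lam i • negE n i }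

/-- The support `|L^n_k|`: the union of the cones `σ_I` over proper subsets
`I ⊊ {0,1,…,n}` with `|I| ≤ k`. -/
def suppL (n k : ℕ) : Set (Fin n → ℝ) :=
  ⋃ I ∈ { I : Finset (Fin (n + 1)) | I ≠ Finset.univ ∧ I.card ≤ k }, sigmaCone n I

/-- The `j`-th extended coordinate of `x`, for `j ∈ {0,1,…,n}`, with `x_0 := 0`. -/
def coordX {n : ℕ} (x : Fin n → ℝ) (j : Fin (n + 1)) : ℝ :=
  if h : (j : ℕ) = 0 then 0 else x ⟨(j : ℕ) - 1, by have := j.isLt; omega⟩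

/-- The tropical polynomial `f(x) = max(0, x_1, …, x_n)`. -/
def tropF {n : ℕ} (x : Fin n → ℝ) : ℝ :=
  (Finset.univ : Finset (Fin (n + 1))).sup' Finset.univ_nonempty (coordX x)

section MyAux
variable {n : ℕ}

lemma coordX_zero (x : Fin n → ℝ) : coordX x 0 = 0 := by simp [coordX]

lemma coordX_succ (x : Fin n → ℝ) (m : Fin n) : coordX x m.succ = x m := by
  have h : ((m.succ : Fin (n+1)) : ℕ) = (m : ℕ) + 1 := rfl
  rw [coordX, dif_neg (by omega)]
  congr 1

lemma coordX_add (x y : Fin n → ℝ) (j : Fin (n+1)) :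
    coordX (x + y) j = coordX x j + coordX y j := by
  unfold coordX; split_ifs <;> simp

lemma coordX_smul (t : ℝ) (x : Fin n → ℝ) (j : Fin (n+1)) :
    coordX (t • x) j = t * coordX x j := by
  unfold coordX; split_ifs <;> simp

lemma coordX_sub (x y : Fin n → ℝ) (j : Fin (n+1)) :
    coordX (x - y) j = coordX x j - coordX y j := by
  unfold coordX; split_ifs <;> simp

lemma coordX_le_tropF (x : Fin n → ℝ) (j : Fin (n+1)) : coordX x j ≤ tropF x :=
  Finset.le_sup' _ (mem_univ j)

lemma exists_tropF_eq (x : Fin n → ℝ) : ∃ j, coordX x j = tropF x := by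
  obtain ⟨j, _, hj⟩ := Finset.exists_mem_eq_sup' Finset.univ_nonempty (coordX x)
  exact ⟨j, hj.symm⟩

lemma continuous_coordX (j : Fin (n+1)) : Continuous fun y : Fin n → ℝ => coordX y j := by
  unfold coordX; split_ifs with h
  · exact continuous_const
  · exact continuous_apply _

noncomputable def coordAff (n : ℕ) (j : Fin (n+1)) : (Fin n → ℝ) →ᵃ[ℝ] ℝ :=
  (if h : (j : ℕ) = 0 then (0 : (Fin n → ℝ) →ₗ[ℝ] ℝ)
   else LinearMap.proj ⟨(j : ℕ) - 1, by have := j.isLt; omega⟩).toAffineMap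

lemma coordAff_apply (j : Fin (n+1)) (y : Fin n → ℝ) : coordAff n j y = coordX y j := by
  unfold coordAff coordX
  split_ifs with h <;> simp

lemma sum_negE_apply (I : Finset (Fin (n+1))) (lam : Fin (n+1) → ℝ) (m : Fin n) :
    (∑ i ∈ I, lam i • negE n i) m
      = (if (0 : Fin (n+1)) ∈ I then lam 0 else 0)
        - (if m.succ ∈ I then lam m.succ else 0) := by
  have key : ∀ i ∈ I, (lam i • negE n i) m
      = (if i = 0 then lam 0 else 0) - (if i = m.succ then lam m.succ else 0) := by
    intro i _
    simp only [Pi.smul_apply, smul_eq_mul, negE]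
    rcases eq_or_ne i 0 with h0 | h0
    · subst h0; simp [(Fin.succ_ne_zero m).symm]
    · have hv0 : (i : ℕ) ≠ 0 := fun h => h0 (Fin.ext h)
      rw [if_neg hv0, if_neg h0]
      rcases eq_or_ne i m.succ with hs | hs
      · subst hs
        rw [if_pos (by simp), if_pos rfl]; ring
      · have hv : (m : ℕ) + 1 ≠ (i : ℕ) := by
          intro h; exact hs (Fin.ext (by simp [← h]))
        rw [if_neg hv, if_neg hs]; ring
  rw [Finset.sum_apply, Finset.sum_congr rfl key, Finset.sum_sub_distrib,
      Finset.sum_ite_eq' I (0 : Fin (n+1)) (fun _ => lam 0),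
      Finset.sum_ite_eq' I m.succ (fun _ => lam m.succ)]

lemma mem_sigmaCone_iff {n : ℕ} {I : Finset (Fin (n+1))} (hI : I ≠ Finset.univ)
    (x : Fin n → ℝ) :
    x ∈ sigmaCone n I ↔ ∀ j ∉ I, coordX x j = tropF x := by
  constructor
  · rintro ⟨lam, hlam, rfl⟩
    set x : Fin n → ℝ := ∑ i ∈ I, lam i • negE n i with hx
    set c : ℝ := if (0 : Fin (n+1)) ∈ I then lam 0 else 0 with hc
    have hc0 : 0 ≤ c := by
      rw [hc]; split_ifs
      · exact hlam 0
      · exact le_rfl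
    have ha : ∀ j ∉ I, coordX x j = c := by
      intro j hj
      rcases eq_or_ne (j : ℕ) 0 with h0 | h0
      · have hj0 : j = 0 := Fin.ext h0
        subst hj0
        rw [coordX_zero, hc, if_neg hj]
      · have hj' : j = (⟨(j : ℕ) - 1, by have := j.isLt; omega⟩ : Fin n).succ := by
          apply Fin.ext; simp [Fin.val_succ]; omega
        rw [hj', coordX_succ, hx, sum_negE_apply, ← hj', if_neg hj, ← hc]
        ring
    have hb : ∀ j, coordX x j ≤ c := by
      intro j
      by_cases hj : j ∈ I
      · rcases eq_or_ne (j : ℕ) 0 with h0 | h0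
        · have hj0 : j = 0 := Fin.ext h0
          subst hj0; rw [coordX_zero]; exact hc0
        · have hj' : j = (⟨(j : ℕ) - 1, by have := j.isLt; omega⟩ : Fin n).succ := by
            apply Fin.ext; simp [Fin.val_succ]; omega
          rw [hj', coordX_succ, hx, sum_negE_apply, ← hj', if_pos hj, ← hc]
          have := hlam j
          linarith
      · exact (ha j hj).le
    have hct : tropF x = c := by
      apply le_antisymm
      · exact Finset.sup'_le _ _ fun j _ => hb j
      · obtain ⟨j, hj⟩ : ∃ j, j ∉ I := by
          by_contra h
          push_neg at h
          exact hI (Finset.eq_univ_iff_forall.2 h)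
        calc c = coordX x j := (ha j hj).symm
        _ ≤ tropF x := coordX_le_tropF x j
    intro j hj
    rw [ha j hj, hct]
  · intro h
    refine ⟨fun i => tropF x - coordX x i, fun i => by simpa using sub_nonneg.2 (coordX_le_tropF x i), ?_⟩
    funext m
    rw [sum_negE_apply]
    have hs : coordX x m.succ = x m := coordX_succ x m
    have h00 : coordX x 0 = 0 := coordX_zero x
    by_cases h0 : (0 : Fin (n+1)) ∈ I <;> by_cases hm : m.succ ∈ I <;>
      simp only [if_pos, if_neg, h0, hm, if_true, if_false]
    · rw [h00]; linarith
    · have := h m.succ hm; rw [hs] at this; rw [h00]; linarith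
    · have := h 0 h0; rw [h00] at this; linarith
    · have := h 0 h0; rw [h00] at this
      have h2 := h m.succ hm; rw [hs] at h2
      linarith

lemma key_iff (n : ℕ) (x : Fin n → ℝ) :
    (¬ ∃ (U : Set (Fin n → ℝ)) (g : (Fin n → ℝ) →ᵃ[ℝ] ℝ),
        IsOpen U ∧ x ∈ U ∧ ∀ y ∈ U, tropF y = g y) ↔
      2 ≤ { j : Fin (n + 1) | coordX x j = tropF x }.ncard := by
  set T : Finset (Fin (n+1)) := Finset.univ.filter (fun j => coordX x j = tropF x) with hT
  have hST : { j : Fin (n + 1) | coordX x j = tropF x } = (T : Set (Fin (n+1))) := by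
    ext j; simp [hT]
  rw [hST, Set.ncard_coe_finset]
  constructor
  · -- ¬ locally affine → 2 ≤ T.card
    intro hna
    by_contra hcard
    push_neg at hcard
    obtain ⟨j0, hj0⟩ := exists_tropF_eq x
    have hj0T : j0 ∈ T := by simp [hT, hj0]
    have hle1 : T.card ≤ 1 := by omega
    have huniq : ∀ i, i ≠ j0 → coordX x i < coordX x j0 := by
      intro i hi
      rcases lt_or_eq_of_le (coordX_le_tropF x i) with h | h
      · rw [hj0]; exact h
      · exact absurd (Finset.card_le_one.1 hle1 i (by simp [hT, h]) j0 hj0T) hi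
    refine hna ⟨⋂ i ∈ Finset.univ.erase j0, {y | coordX y i < coordX y j0},
      coordAff n j0, ?_, ?_, ?_⟩
    · exact isOpen_biInter_finset fun i _ =>
        isOpen_lt (continuous_coordX i) (continuous_coordX j0)
    · simp only [Set.mem_iInter]
      intro i hi
      exact huniq i (Finset.ne_of_mem_erase hi)
    · intro y hy
      simp only [Set.mem_iInter] at hy
      rw [coordAff_apply]
      apply le_antisymm
      · apply Finset.sup'_le
        intro i _
        rcases eq_or_ne i j0 with rfl | hi
        · exact le_rfl
        · exact (hy i (Finset.mem_erase.2 ⟨hi, Finset.mem_univ i⟩)).le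
      · exact coordX_le_tropF y j0
  · -- 2 ≤ T.card → ¬ locally affine
    intro hcard
    rintro ⟨U, g, hU, hxU, hfg⟩
    obtain ⟨j, hjT, k, hkT, hjk⟩ := Finset.one_lt_card.1 hcard
    have hjx : coordX x j = tropF x := by simpa [hT] using hjT
    have hkx : coordX x k = tropF x := by simpa [hT] using hkT
    set v : Fin n → ℝ := fun m =>
      (if (m : ℕ) + 1 = (j : ℕ) then (1 : ℝ) else 0)
        - (if (m : ℕ) + 1 = (k : ℕ) then (1 : ℝ) else 0) with hv
    have hvjk : (j : ℕ) ≠ (k : ℕ) := fun h => hjk (Fin.ext h)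
    have hcj : coordX v j = if (j : ℕ) = 0 then 0 else 1 := by
      rcases eq_or_ne (j : ℕ) 0 with h0 | h0
      · rw [if_pos h0]
        have : j = 0 := Fin.ext h0
        rw [this, coordX_zero]
      · rw [if_neg h0, coordX, dif_neg h0, hv]
        simp only
        rw [if_pos (by omega), if_neg (by omega)]
        ring
    have hck : coordX v k = if (k : ℕ) = 0 then 0 else -1 := by
      rcases eq_or_ne (k : ℕ) 0 with h0 | h0
      · rw [if_pos h0]
        have : k = 0 := Fin.ext h0
        rw [this, coordX_zero]
      · rw [if_neg h0, coordX, dif_neg h0, hv]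
        simp only
        rw [if_neg (by omega), if_pos (by omega)]
        ring
    have hcpos : 0 < coordX v j - coordX v k := by
      rw [hcj, hck]
      split_ifs with h1 h2 <;> norm_num
      omega
    obtain ⟨ε, hε, hball⟩ := Metric.isOpen_iff.1 hU x hxU
    set t : ℝ := ε / (2 * (‖v‖ + 1)) with ht
    have hnv : (0:ℝ) < ‖v‖ + 1 := by positivity
    have htpos : 0 < t := by positivity
    have hdist : ∀ s : ℝ, |s| = t → dist (x + s • v) x < ε := by
      intro s hs
      rw [dist_eq_norm]
      have : x + s • v - x = s • v := by ring
      rw [this, norm_smul, Real.norm_eq_abs, hs]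
      calc t * ‖v‖ < t * (‖v‖ + 1) := by nlinarith [norm_nonneg v]
      _ = ε / 2 := by rw [ht]; field_simp
      _ < ε := by linarith
    have hmem1 : x + t • v ∈ U := hball (by
      simpa [Metric.mem_ball] using hdist t (abs_of_pos htpos))
    have hmem2 : x + (-t) • v ∈ U := hball (by
      simpa [Metric.mem_ball] using hdist (-t) (by rw [abs_neg]; exact abs_of_pos htpos))
    -- affine identity
    have hgsum : g (x + t • v) + g (x + (-t) • v) = 2 * g x := by
      have h1 : g (x + t • v) = g.linear (t • v) + g x := by
        have := g.map_vadd x (t • v)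
        simpa [vadd_eq_add, add_comm] using this
      have h2 : g (x + (-t) • v) = g.linear ((-t) • v) + g x := by
        have := g.map_vadd x ((-t) • v)
        simpa [vadd_eq_add, add_comm] using this
      have h3 : g.linear ((-t) • v) = - g.linear (t • v) := by
        rw [neg_smul, map_neg]
      rw [h1, h2, h3]; ring
    have hlb1 : tropF x + t * coordX v j ≤ tropF (x + t • v) := by
      have : coordX (x + t • v) j = coordX x j + t * coordX v j := by
        rw [coordX_add, coordX_smul]
      rw [← hjx, ← this]
      exact coordX_le_tropF _ j
    have hlb2 : tropF x + (-t) * coordX v k ≤ tropF (x + (-t) • v) := by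
      have : coordX (x + (-t) • v) k = coordX x k + (-t) * coordX v k := by
        rw [coordX_add, coordX_smul]
      rw [← hkx, ← this]
      exact coordX_le_tropF _ k
    have he1 : tropF (x + t • v) = g (x + t • v) := hfg _ hmem1
    have he2 : tropF (x + (-t) • v) = g (x + (-t) • v) := hfg _ hmem2
    have he0 : tropF x = g x := hfg _ hxU
    nlinarith [hcpos, htpos]

lemma part2_iff (n : ℕ) (hn : 1 ≤ n) (x : Fin n → ℝ) :
    2 ≤ { j : Fin (n + 1) | coordX x j = tropF x }.ncard ↔ x ∈ suppL n (n - 1) := by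
  have hST : { j : Fin (n + 1) | coordX x j = tropF x }
      = ((Finset.univ.filter (fun j => coordX x j = tropF x) : Finset (Fin (n+1))) :
          Set (Fin (n+1))) := by
    ext j; simp
  set T : Finset (Fin (n+1)) := Finset.univ.filter (fun j => coordX x j = tropF x) with hT
  rw [hST, Set.ncard_coe_finset]
  simp only [suppL, Set.mem_iUnion, Set.mem_setOf_eq, exists_prop]
  constructor
  · intro hcard
    have hTne : T.Nonempty := Finset.card_pos.1 (by omega)
    have hne : Tᶜ ≠ Finset.univ := by
      intro h
      obtain ⟨j, hj⟩ := hTne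
      have : j ∈ Tᶜ := h ▸ Finset.mem_univ j
      exact (Finset.mem_compl.1 this) hj
    refine ⟨Tᶜ, ⟨hne, ?_⟩, ?_⟩
    · rw [Finset.card_compl]
      simp only [Fintype.card_fin]
      omega
    · rw [mem_sigmaCone_iff hne]
      intro j hj
      have : j ∈ T := by
        by_contra hc
        exact hj (Finset.mem_compl.2 hc)
      simpa [hT] using this
  · rintro ⟨I, ⟨hIne, hIcard⟩, hx⟩
    rw [mem_sigmaCone_iff hIne] at hx
    have hsub : Iᶜ ⊆ T := by
      intro j hj
      simp only [hT, Finset.mem_filter, Finset.mem_univ, true_and]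
      exact hx j (Finset.mem_compl.1 hj)
    have hc : 2 ≤ Iᶜ.card := by
      rw [Finset.card_compl]
      simp only [Fintype.card_fin]
      have : I.card ≤ n - 1 := hIcard
      omega
    exact le_trans hc (Finset.card_le_card hsub)

end MyAux

/-- For `n ≥ 1` and `x ∈ ℝ^n`, the function
`f(x) = max(0, x_1, …, x_n)` fails to be locally affine at `x` iff at least two
indices `j ∈ {0,1,…,n}` satisfy `x_j = f(x)`. Equivalently, the non-locally-affine
locus of `f` is exactly `|L^n_{n-1}|`. -/
theorem tropF_not_locally_affine_iff (n : ℕ) (hn : 1 ≤ n) :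
    (∀ x : Fin n → ℝ,
      (¬ ∃ (U : Set (Fin n → ℝ)) (g : (Fin n → ℝ) →ᵃ[ℝ] ℝ),
          IsOpen U ∧ x ∈ U ∧ ∀ y ∈ U, tropF y = g y) ↔
        2 ≤ { j : Fin (n + 1) | coordX x j = tropF x }.ncard) ∧
    { x : Fin n → ℝ |
      ¬ ∃ (U : Set (Fin n → ℝ)) (g : (Fin n → ℝ) →ᵃ[ℝ] ℝ),
          IsOpen U ∧ x ∈ U ∧ ∀ y ∈ U, tropF y = g y } = suppL n (n - 1) := by
  refine ⟨fun x => key_iff n x, ?_⟩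
  ext x
  simp only [Set.mem_setOf_eq]
  rw [key_iff n x, part2_iff n hn x]
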